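/- Let a : ℕ → ℍ and f : ℍ → ℍ satisfy the Bohr hypotheses, and assume additionally that a 0 = (α : ℍ) for a real number α with 0 ≤ α < 1. Then for every n ≥ 1 one has ‖a n‖ < 2^(n+1) · (1 − α). -/

import Mathlib

local notation "ℍ" => Quaternion ℝ

open Real

namespace WeakBohrAux

lemma intcos (k : ℤ) (hk : k ≠ 0) : ∫ θ in (0:ℝ)..(2*π), Real.cos (k*θ) = 0 := by
  rw [intervalIntegral.integral_comp_mul_left (fun x => Real.cos x) (by exact_mod_cast hk)]
  rw [integral_cos]
  have h1 : ((k:ℝ) * (2*π)) = 2 * k * π := by ring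
  have : Real.sin ((k:ℝ)*(2*π)) = 0 := by
    rw [h1]; exact_mod_cast Real.sin_int_mul_pi (2*k)
  simp [this]

lemma intsin (k : ℤ) : ∫ θ in (0:ℝ)..(2*π), Real.sin (k*θ) = 0 := by
  rcases eq_or_ne k 0 with h | h
  · simp [h]
  rw [intervalIntegral.integral_comp_mul_left (fun x => Real.sin x) (by exact_mod_cast h)]
  rw [integral_sin]
  have : Real.cos ((k:ℝ)*(2*π)) = 1 := by exact_mod_cast Real.cos_int_mul_two_pi k
  simp [this]

lemma intcos' (k : ℤ) : ∫ θ in (0:ℝ)..(2*π), Real.cos (k*θ) = if k = 0 then 2*π else 0 := by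
  rcases eq_or_ne k 0 with h | h
  · simp [h]
  · simp [h, intcos k h]

lemma intcoscos (m n : ℕ) (hn : 1 ≤ n) :
    ∫ θ in (0:ℝ)..(2*π), Real.cos (m*θ) * Real.cos (n*θ)
      = if m = n then π else 0 := by
  have key : ∀ θ:ℝ, Real.cos (m*θ) * Real.cos (n*θ)
      = (Real.cos (((m:ℝ)-(n:ℝ))*θ) + Real.cos (((m:ℝ)+(n:ℝ))*θ))/2 := by
    intro θ
    rw [sub_mul, add_mul, Real.cos_sub, Real.cos_add]
    ring
  simp only [key]
  have h1 := intcos' ((m:ℤ)-n)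
  have h2 := intcos ((m:ℤ)+n) (by omega)
  push_cast at h1 h2
  rw [intervalIntegral.integral_div, intervalIntegral.integral_add]
  · rw [h1, h2]
    have : ((m:ℤ) - n = 0) ↔ (m = n) := by omega
    push_cast at this
    simp only [this]
    split <;> ring
  · apply Continuous.intervalIntegrable; continuity
  · apply Continuous.intervalIntegrable; continuity

lemma intsincos (m n : ℕ) :
    ∫ θ in (0:ℝ)..(2*π), Real.sin (m*θ) * Real.cos (n*θ) = 0 := by
  have key : ∀ θ:ℝ, Real.sin (m*θ) * Real.cos (n*θ)
      = (Real.sin (((m:ℝ)+(n:ℝ))*θ) + Real.sin (((m:ℝ)-(n:ℝ))*θ))/2 := by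
    intro θ
    rw [sub_mul, add_mul, Real.sin_sub, Real.sin_add]
    ring
  simp only [key]
  have h1 := intsin ((m:ℤ)+n)
  have h2 := intsin ((m:ℤ)-n)
  push_cast at h1 h2
  rw [intervalIntegral.integral_div, intervalIntegral.integral_add]
  · rw [h1, h2]; ring
  · apply Continuous.intervalIntegrable; continuity
  · apply Continuous.intervalIntegrable; continuity

lemma intsinsin (m n : ℕ) (hn : 1 ≤ n) :
    ∫ θ in (0:ℝ)..(2*π), Real.sin (m*θ) * Real.sin (n*θ)
      = if m = n then π else 0 := by
  have key : ∀ θ:ℝ, Real.sin (m*θ) * Real.sin (n*θ)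
      = (Real.cos (((m:ℝ)-(n:ℝ))*θ) - Real.cos (((m:ℝ)+(n:ℝ))*θ))/2 := by
    intro θ
    rw [sub_mul, add_mul, Real.cos_sub, Real.cos_add]
    ring
  simp only [key]
  have h1 := intcos' ((m:ℤ)-n)
  have h2 := intcos ((m:ℤ)+n) (by omega)
  push_cast at h1 h2
  rw [intervalIntegral.integral_div, intervalIntegral.integral_sub]
  · rw [h1, h2]
    have : ((m:ℤ) - n = 0) ↔ (m = n) := by omega
    push_cast at this
    simp only [this]
    split <;> ring
  · apply Continuous.intervalIntegrable; continuity
  · apply Continuous.intervalIntegrable; continuity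

/-- the slice circle element -/
noncomputable def e (J : ℍ) (θ : ℝ) : ℍ := (Real.cos θ : ℍ) + Real.sin θ • J

variable (J : ℍ)

lemma e_mul (hre : J.re = 0) (hsq : J.imI^2 + J.imJ^2 + J.imK^2 = 1)
    (θ₁ θ₂ : ℝ) : e J θ₁ * e J θ₂ = e J (θ₁ + θ₂) := by
  unfold e
  ext
  · simp [Quaternion.re_mul, Real.cos_add, hre]
    linear_combination (-(Real.sin θ₁ * Real.sin θ₂)) * hsq
  · simp [Quaternion.imI_mul, Real.cos_add, Real.sin_add, hre]; ring
  · simp [Quaternion.imJ_mul, Real.cos_add, Real.sin_add, hre]; ring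
  · simp [Quaternion.imK_mul, Real.cos_add, Real.sin_add, hre]; ring

lemma e_zero : e J 0 = 1 := by unfold e; simp

lemma e_pow (hre : J.re = 0) (hsq : J.imI^2 + J.imJ^2 + J.imK^2 = 1)
    (θ : ℝ) (m : ℕ) : (e J θ)^m = e J (m * θ) := by
  induction m with
  | zero => simp [e_zero]
  | succ k ih =>
    rw [pow_succ, ih, e_mul J hre hsq]
    norm_num
    ring_nf

lemma e_norm (hre : J.re = 0) (hsq : J.imI^2 + J.imJ^2 + J.imK^2 = 1) (θ : ℝ) :
    ‖e J θ‖ = 1 := by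
  have h : Quaternion.normSq (e J θ) = 1 := by
    rw [Quaternion.normSq_def']
    unfold e
    simp [hre]
    nlinarith [hsq, Real.sin_sq_add_cos_sq θ]
  have := Quaternion.normSq_eq_norm_mul_self (a := e J θ)
  nlinarith [norm_nonneg (e J θ)]

lemma e_mul_re (b : ℍ) (θ : ℝ) :
    (e J θ * b).re = Real.cos θ * b.re + Real.sin θ * (J * b).re := by
  unfold e
  simp [Quaternion.re_mul]
  ring

lemma e_continuous : Continuous (e J) := by
  unfold e
  exact (Quaternion.continuous_coe.comp Real.continuous_cos).add
    (Real.continuous_sin.smul continuous_const)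

lemma abs_re_le (x : ℍ) : |x.re| ≤ ‖x‖ := by
  have h1 : Quaternion.normSq x = ‖x‖ * ‖x‖ := Quaternion.normSq_eq_norm_mul_self x
  have h2 : Quaternion.normSq x = x.re^2 + x.imI^2 + x.imJ^2 + x.imK^2 := Quaternion.normSq_def' x
  have h3 : x.re^2 ≤ ‖x‖^2 := by nlinarith [sq_nonneg x.imI, sq_nonneg x.imJ, sq_nonneg x.imK]
  have := norm_nonneg x
  rw [abs_le]; constructor <;> nlinarith

lemma norm_J (hre : J.re = 0) (hsq : J.imI^2 + J.imJ^2 + J.imK^2 = 1) : ‖J‖ = 1 := by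
  have h1 : Quaternion.normSq J = ‖J‖ * ‖J‖ := Quaternion.normSq_eq_norm_mul_self J
  have h2 := Quaternion.normSq_def' J
  have := norm_nonneg J
  nlinarith

lemma exists_J (b : ℍ) : ∃ J : ℍ, J.re = 0 ∧ J.imI^2 + J.imJ^2 + J.imK^2 = 1 ∧
    b.re^2 + ((J*b).re)^2 = ‖b‖^2 := by
  have hnormsq : ‖b‖^2 = b.re^2 + (b.imI^2 + b.imJ^2 + b.imK^2) := by
    have h1 : Quaternion.normSq b = ‖b‖ * ‖b‖ := Quaternion.normSq_eq_norm_mul_self b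
    have h2 := Quaternion.normSq_def' b
    rw [sq]; linarith [h1 ▸ h2]
  set t := Real.sqrt (b.imI^2 + b.imJ^2 + b.imK^2) with ht
  have htnn : (0:ℝ) ≤ b.imI^2 + b.imJ^2 + b.imK^2 := by positivity
  have ht2 : t^2 = b.imI^2 + b.imJ^2 + b.imK^2 := Real.sq_sqrt htnn
  rcases eq_or_ne t 0 with h0 | h0
  · refine ⟨⟨0,1,0,0⟩, rfl, by norm_num, ?_⟩
    have : b.imI^2 + b.imJ^2 + b.imK^2 = 0 := by rw [← ht2, h0]; ring
    have hI : b.imI = 0 := by nlinarith [sq_nonneg b.imI, sq_nonneg b.imJ, sq_nonneg b.imK]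
    erw [Quaternion.re_mul]
    simp [hI]
    nlinarith [sq_nonneg b.imJ, sq_nonneg b.imK]
  · refine ⟨⟨0, t⁻¹ * b.imI, t⁻¹ * b.imJ, t⁻¹ * b.imK⟩, rfl, ?_, ?_⟩
    · field_simp
      linarith [ht2]
    · erw [Quaternion.re_mul]
      show b.re^2 + ((0:ℝ) * b.re - t⁻¹ * b.imI * b.imI - t⁻¹ * b.imJ * b.imJ
          - t⁻¹ * b.imK * b.imK)^2 = ‖b‖^2
      have he : (0:ℝ) * b.re - t⁻¹ * b.imI * b.imI - t⁻¹ * b.imJ * b.imJ - t⁻¹ * b.imK * b.imK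
          = -t := by
        field_simp
        nlinarith [ht2]
      rw [he, hnormsq, ← ht2]
      ring

end WeakBohrAux

/-- `(f, a)` satisfies the Bohr hypotheses: `f` is continuous on the closed unit ball,
agrees with the power series `∑ qⁿ · a n` on the open unit ball, and `‖f‖ < 1` on the
closed unit ball. -/
def BohrHypotheses (f : ℍ → ℍ) (a : ℕ → ℍ) : Prop :=
  ContinuousOn f {q : ℍ | ‖q‖ ≤ 1} ∧
  (∀ q : ℍ, ‖q‖ < 1 → HasSum (fun n => q ^ n * a n) (f q)) ∧
  (∀ q : ℍ, ‖q‖ ≤ 1 → ‖f q‖ < 1)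

namespace WeakBohrAux

set_option maxHeartbeats 1000000 in
lemma summable_aux (a : ℕ → ℍ) (f : ℍ → ℍ) (hBohr : BohrHypotheses f a) :
    Summable (fun m => (3/4:ℝ)^m * ‖a m‖) := by
  have h78 : HasSum (fun m => (((7/8:ℝ)):ℍ) ^ m * a m) (f ((7/8:ℝ):ℍ)) :=
    hBohr.2.1 _ (by rw [Quaternion.norm_coe]; norm_num)
  have hnorm : ∀ m, ‖(((7/8:ℝ)):ℍ) ^ m * a m‖ = (7/8:ℝ)^m * ‖a m‖ := by
    intro m
    rw [norm_mul, norm_pow, Quaternion.norm_coe]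
    norm_num
  have ht : Filter.Tendsto (fun m => (7/8:ℝ)^m * ‖a m‖) Filter.atTop (nhds 0) := by
    have := h78.summable.tendsto_atTop_zero.norm
    simpa [hnorm] using this
  obtain ⟨C, hC⟩ := ht.bddAbove_range
  have hCmem : ∀ m, (7/8:ℝ)^m * ‖a m‖ ≤ C := by
    intro m; exact hC (Set.mem_range_self m)
  have hgeo : Summable (fun m : ℕ => C * (6/7:ℝ)^m) :=
    (summable_geometric_of_lt_one (r := (6/7:ℝ)) (by norm_num) (by norm_num)).mul_left C
  refine Summable.of_nonneg_of_le (fun m => by positivity) ?_ hgeo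
  · intro m
    have : (3/4:ℝ)^m * ‖a m‖ = (6/7:ℝ)^m * ((7/8:ℝ)^m * ‖a m‖) := by
      rw [← mul_assoc, ← mul_pow]; norm_num
    rw [this]
    have h6 : (0:ℝ) ≤ (6/7:ℝ)^m := by positivity
    calc (6/7:ℝ)^m * ((7/8:ℝ)^m * ‖a m‖) ≤ (6/7:ℝ)^m * C := by
          exact mul_le_mul_of_nonneg_left (hCmem m) h6
      _ = C * (6/7:ℝ)^m := by ring

set_option maxHeartbeats 2000000 in
lemma core (a : ℕ → ℍ) (f : ℍ → ℍ) (hBohr : BohrHypotheses f a)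
    (α : ℝ) (ha0 : a 0 = (α : ℍ))
    (n : ℕ) (hn : 1 ≤ n) (J : ℍ) (hre : J.re = 0)
    (hsq : J.imI^2 + J.imJ^2 + J.imK^2 = 1)
    (x y : ℝ) (hxy : x^2 + y^2 ≤ 1) :
    π * ((3/4:ℝ)^n * (x * (a n).re + y * (J * a n).re)) ≤ 2*π*(1-α) := by
  set q : ℝ → ℍ := fun θ => (((3:ℝ)/4 : ℝ) : ℍ) * e J θ with hqdef
  have hqnorm : ∀ θ, ‖q θ‖ = 3/4 := by
    intro θ
    rw [hqdef]
    simp only [norm_mul, Quaternion.norm_coe, e_norm J hre hsq]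
    norm_num
  have hqlt : ∀ θ, ‖q θ‖ < 1 := fun θ => by rw [hqnorm]; norm_num
  have hqle : ∀ θ, q θ ∈ {p : ℍ | ‖p‖ ≤ 1} := fun θ => by
    simp only [Set.mem_setOf_eq, hqnorm]; norm_num
  set c : ℕ → ℝ := fun m => (a m).re with hcdef
  set s : ℕ → ℝ := fun m => (J * a m).re with hsdef
  set term : ℕ → ℝ → ℝ :=
    fun m θ => (3/4:ℝ)^m * (Real.cos (m*θ) * c m + Real.sin (m*θ) * s m) with htermdef
  set v : ℝ → ℝ := fun θ => (f (q θ)).re with hvdef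
  -- power formula
  have hqpow : ∀ (θ : ℝ) (m : ℕ), (q θ)^m = (((3/4:ℝ)^m : ℝ) : ℍ) * e J ((m:ℝ)*θ) := by
    intro θ m
    induction m with
    | zero => simp [e_zero]
    | succ k ih =>
      rw [pow_succ, ih, hqdef]
      have : (((3/4:ℝ)^k : ℝ) : ℍ) * e J ((k:ℝ)*θ) * ((((3:ℝ)/4 : ℝ) : ℍ) * e J θ)
          = ((((3/4:ℝ)^k * (3/4) : ℝ)) : ℍ) * (e J ((k:ℝ)*θ) * e J θ) := by
        rw [Quaternion.coe_mul]
        rw [mul_assoc, mul_assoc]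
        congr 1
        rw [← mul_assoc, ← Quaternion.coe_commutes, mul_assoc]
      rw [this, e_mul J hre hsq]
      have harg : (k:ℝ)*θ + θ = ((k+1 : ℕ):ℝ)*θ := by push_cast; ring
      rw [harg, pow_succ]
  have htermre : ∀ (θ : ℝ) (m : ℕ), ((q θ)^m * a m).re = term m θ := by
    intro θ m
    rw [hqpow θ m, mul_assoc, Quaternion.coe_mul_eq_smul]
    rw [Quaternion.re_smul]
    rw [e_mul_re]
    simp [htermdef, hcdef, hsdef]
  have hterm : ∀ θ : ℝ, HasSum (fun m => term m θ) (v θ) := by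
    intro θ
    have h := hBohr.2.1 (q θ) (hqlt θ)
    have hmap := h.map (AddMonoidHom.mk' (fun p : ℍ => p.re) (fun p r => rfl))
      Quaternion.continuous_re
    simp only [Function.comp_def] at hmap
    have : (fun m => ((q θ)^m * a m).re) = fun m => term m θ := funext (htermre θ)
    rw [hvdef]
    exact this ▸ hmap
  -- continuity
  have hqcont : Continuous q := continuous_const.mul (e_continuous J)
  have hvcont : Continuous v :=
    Quaternion.continuous_re.comp (hBohr.1.comp_continuous hqcont hqle)
  have htermcont : ∀ m, Continuous (term m) := by
    intro m
    apply Continuous.mul continuous_const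
    exact ((Real.continuous_cos.comp (continuous_const.mul continuous_id)).mul
      continuous_const).add
      ((Real.continuous_sin.comp (continuous_const.mul continuous_id)).mul continuous_const)
  have hnormJa : ∀ m, |s m| ≤ ‖a m‖ := by
    intro m
    have := abs_re_le (J * a m)
    rwa [norm_mul, norm_J J hre hsq, one_mul] at this
  have hca : ∀ m, |c m| ≤ ‖a m‖ := fun m => abs_re_le (a m)
  have hbound : ∀ (m : ℕ) (θ : ℝ), |term m θ| ≤ 2 * ((3/4:ℝ)^m * ‖a m‖) := by
    intro m θ
    have h1 : |Real.cos ((m:ℝ)*θ)| ≤ 1 := Real.abs_cos_le_one _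
    have h2 : |Real.sin ((m:ℝ)*θ)| ≤ 1 := Real.abs_sin_le_one _
    have h3 : (0:ℝ) < (3/4:ℝ)^m := by positivity
    rw [htermdef]
    simp only []
    rw [abs_mul, abs_of_pos h3]
    have h4 : |Real.cos ((m:ℝ)*θ) * c m + Real.sin ((m:ℝ)*θ) * s m| ≤ 2 * ‖a m‖ := by
      calc |Real.cos ((m:ℝ)*θ) * c m + Real.sin ((m:ℝ)*θ) * s m|
          ≤ |Real.cos ((m:ℝ)*θ) * c m| + |Real.sin ((m:ℝ)*θ) * s m| := abs_add_le _ _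
        _ = |Real.cos ((m:ℝ)*θ)| * |c m| + |Real.sin ((m:ℝ)*θ)| * |s m| := by
            rw [abs_mul, abs_mul]
        _ ≤ 2 * ‖a m‖ := by
            nlinarith [hca m, hnormJa m, abs_nonneg (c m), abs_nonneg (s m),
              abs_nonneg (Real.cos ((m:ℝ)*θ)), abs_nonneg (Real.sin ((m:ℝ)*θ)),
              norm_nonneg (a m)]
    calc (3/4:ℝ)^m * |Real.cos ((m:ℝ)*θ) * c m + Real.sin ((m:ℝ)*θ) * s m|
        ≤ (3/4:ℝ)^m * (2 * ‖a m‖) := by exact mul_le_mul_of_nonneg_left h4 h3.le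
      _ = 2 * ((3/4:ℝ)^m * ‖a m‖) := by ring
  -- swap sum and integral
  have hswap : ∀ w : ℝ → ℝ, Continuous w → (∀ θ, |w θ| ≤ 1) →
      HasSum (fun m => ∫ θ in (0:ℝ)..(2*π), w θ * term m θ)
        (∫ θ in (0:ℝ)..(2*π), w θ * v θ) := by
    intro w hw hwb
    apply intervalIntegral.hasSum_integral_of_dominated_convergence
      (bound := fun (m : ℕ) (_ : ℝ) => 2 * ((3/4:ℝ)^m * ‖a m‖))
    · exact fun m => ((hw.mul (htermcont m)).aestronglyMeasurable)
    · intro m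
      filter_upwards with θ _
      rw [Real.norm_eq_abs, abs_mul]
      calc |w θ| * |term m θ| ≤ 1 * (2 * ((3/4:ℝ)^m * ‖a m‖)) :=
            mul_le_mul (hwb θ) (hbound m θ) (abs_nonneg _) zero_le_one
        _ = 2 * ((3/4:ℝ)^m * ‖a m‖) := by ring
    · filter_upwards with θ _
      exact (summable_aux a f hBohr).mul_left 2
    · exact intervalIntegrable_const
    · filter_upwards with θ _
      exact (hterm θ).mul_left (w θ)
  have habsv : ∀ θ : ℝ, |v θ| ≤ 1 := fun θ =>
    le_of_lt (lt_of_le_of_lt (abs_re_le _) (hBohr.2.2 _ (hqle θ)))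
  -- the weight function
  set w : ℝ → ℝ := fun θ => x * Real.cos ((n:ℝ)*θ) + y * Real.sin ((n:ℝ)*θ) with hwdef
  have hwcont : Continuous w := by
    apply Continuous.add
    · exact continuous_const.mul (Real.continuous_cos.comp (continuous_const.mul continuous_id))
    · exact continuous_const.mul (Real.continuous_sin.comp (continuous_const.mul continuous_id))
  have hwb : ∀ θ, |w θ| ≤ 1 := by
    intro θ
    have hpyth := Real.sin_sq_add_cos_sq ((n:ℝ)*θ)
    have h2 : (w θ)^2 ≤ 1 := by
      rw [hwdef]
      simp only []
      nlinarith [sq_nonneg (x * Real.sin ((n:ℝ)*θ) - y * Real.cos ((n:ℝ)*θ))]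
    rw [abs_le]; constructor <;> nlinarith [h2]
  have hIgr : ∀ g : ℝ → ℝ, Continuous g → IntervalIntegrable g MeasureTheory.volume 0 (2*π) :=
    fun g hg => hg.intervalIntegrable 0 (2*π)
  have hccos : ∀ k : ℕ, Continuous (fun θ : ℝ => Real.cos ((k:ℝ)*θ)) := fun k =>
    Real.continuous_cos.comp (continuous_const.mul continuous_id)
  have hcsin : ∀ k : ℕ, Continuous (fun θ : ℝ => Real.sin ((k:ℝ)*θ)) := fun k =>
    Real.continuous_sin.comp (continuous_const.mul continuous_id)
  -- value of each integral against w
  have hval : ∀ m : ℕ, (∫ θ in (0:ℝ)..(2*π), w θ * term m θ)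
      = if m = n then π * ((3/4:ℝ)^n * (x * c n + y * s n)) else 0 := by
    intro m
    have hint : (fun θ => w θ * term m θ) = fun θ =>
        ((3/4:ℝ)^m * (x * c m)) * (Real.cos ((m:ℝ)*θ) * Real.cos ((n:ℝ)*θ))
        + (((3/4:ℝ)^m * (x * s m)) * (Real.sin ((m:ℝ)*θ) * Real.cos ((n:ℝ)*θ))
        + (((3/4:ℝ)^m * (y * c m)) * (Real.sin ((n:ℝ)*θ) * Real.cos ((m:ℝ)*θ))
        + ((3/4:ℝ)^m * (y * s m)) * (Real.sin ((m:ℝ)*θ) * Real.sin ((n:ℝ)*θ)))) := by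
      funext θ
      rw [hwdef, htermdef]
      simp only []
      ring
    have hA : IntervalIntegrable (fun θ => ((3/4:ℝ)^m * (x * c m)) *
        (Real.cos ((m:ℝ)*θ) * Real.cos ((n:ℝ)*θ))) MeasureTheory.volume 0 (2*π) :=
      hIgr _ (continuous_const.mul ((hccos m).mul (hccos n)))
    have hB : IntervalIntegrable (fun θ => ((3/4:ℝ)^m * (x * s m)) *
        (Real.sin ((m:ℝ)*θ) * Real.cos ((n:ℝ)*θ))) MeasureTheory.volume 0 (2*π) :=
      hIgr _ (continuous_const.mul ((hcsin m).mul (hccos n)))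
    have hC : IntervalIntegrable (fun θ => ((3/4:ℝ)^m * (y * c m)) *
        (Real.sin ((n:ℝ)*θ) * Real.cos ((m:ℝ)*θ))) MeasureTheory.volume 0 (2*π) :=
      hIgr _ (continuous_const.mul ((hcsin n).mul (hccos m)))
    have hD : IntervalIntegrable (fun θ => ((3/4:ℝ)^m * (y * s m)) *
        (Real.sin ((m:ℝ)*θ) * Real.sin ((n:ℝ)*θ))) MeasureTheory.volume 0 (2*π) :=
      hIgr _ (continuous_const.mul ((hcsin m).mul (hcsin n)))
    rw [hint, intervalIntegral.integral_add hA (hB.add (hC.add hD)),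
        intervalIntegral.integral_add hB (hC.add hD),
        intervalIntegral.integral_add hC hD,
        intervalIntegral.integral_const_mul, intervalIntegral.integral_const_mul,
        intervalIntegral.integral_const_mul, intervalIntegral.integral_const_mul,
        intcoscos m n hn, intsincos m n, intsincos n m, intsinsin m n hn]
    rcases eq_or_ne m n with h | h
    · subst h; simp; ring
    · simp [h]
  have hsum1 := hswap w hwcont hwb
  have hP : (∫ θ in (0:ℝ)..(2*π), w θ * v θ)
      = π * ((3/4:ℝ)^n * (x * c n + y * s n)) := by
    have h1 : HasSum (fun m => if m = n then π * ((3/4:ℝ)^n * (x * c n + y * s n)) else 0)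
        (∫ θ in (0:ℝ)..(2*π), w θ * v θ) := by
      have : (fun m => ∫ θ in (0:ℝ)..(2*π), w θ * term m θ)
          = fun m => if m = n then π * ((3/4:ℝ)^n * (x * c n + y * s n)) else 0 :=
        funext hval
      exact this ▸ hsum1
    have h2 : HasSum (fun m => if m = n then π * ((3/4:ℝ)^n * (x * c n + y * s n)) else 0)
        (π * ((3/4:ℝ)^n * (x * c n + y * s n))) := hasSum_ite_eq n _
    exact h1.unique h2
  -- the mean value
  have hmean : (∫ θ in (0:ℝ)..(2*π), v θ) = 2*π*α := by
    have hsum0 := hswap (fun _ => (1:ℝ)) continuous_const (fun θ => by norm_num)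
    have hval0 : ∀ m : ℕ, (∫ θ in (0:ℝ)..(2*π), (1:ℝ) * term m θ)
        = if m = 0 then 2*π*α else 0 := by
      intro m
      have hint : (fun θ => (1:ℝ) * term m θ) = fun θ =>
          ((3/4:ℝ)^m * c m) * Real.cos ((m:ℝ)*θ) + ((3/4:ℝ)^m * s m) * Real.sin ((m:ℝ)*θ) := by
        funext θ; rw [htermdef]; simp only []; ring
      have hA : IntervalIntegrable (fun θ => ((3/4:ℝ)^m * c m) * Real.cos ((m:ℝ)*θ))
          MeasureTheory.volume 0 (2*π) := hIgr _ (continuous_const.mul (hccos m))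
      have hB : IntervalIntegrable (fun θ => ((3/4:ℝ)^m * s m) * Real.sin ((m:ℝ)*θ))
          MeasureTheory.volume 0 (2*π) := hIgr _ (continuous_const.mul (hcsin m))
      have h1 := intcos' (m:ℤ)
      have h2 := intsin (m:ℤ)
      push_cast at h1 h2
      rw [hint, intervalIntegral.integral_add hA hB,
          intervalIntegral.integral_const_mul, intervalIntegral.integral_const_mul, h1, h2]
      have hc0 : c 0 = α := by rw [hcdef]; simp [ha0]
      rcases eq_or_ne m 0 with h | h
      · subst h; simp [hc0]; ring
      · have : ((m:ℝ) = 0) ↔ False := by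
          constructor
          · intro hm; exact h (by exact_mod_cast hm)
          · intro hf; exact hf.elim
        simp [h, this]
    have h1 : HasSum (fun m => if m = 0 then 2*π*α else 0)
        (∫ θ in (0:ℝ)..(2*π), (1:ℝ) * v θ) := by
      have : (fun m => ∫ θ in (0:ℝ)..(2*π), (1:ℝ) * term m θ)
          = fun m => if m = 0 then 2*π*α else 0 := funext hval0
      exact this ▸ hsum0
    have h2 : HasSum (fun m : ℕ => if m = 0 then 2*π*α else 0) (2*π*α) := hasSum_ite_eq 0 _
    have h3 := h1.unique h2
    simpa using h3
  -- ∫ w = 0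
  have hwint : (∫ θ in (0:ℝ)..(2*π), w θ) = 0 := by
    have hA : IntervalIntegrable (fun θ => x * Real.cos ((n:ℝ)*θ))
        MeasureTheory.volume 0 (2*π) := hIgr _ (continuous_const.mul (hccos n))
    have hB : IntervalIntegrable (fun θ => y * Real.sin ((n:ℝ)*θ))
        MeasureTheory.volume 0 (2*π) := hIgr _ (continuous_const.mul (hcsin n))
    have h1 := intcos (n:ℤ) (by exact_mod_cast Nat.one_le_iff_ne_zero.mp hn)
    have h2 := intsin (n:ℤ)
    push_cast at h1 h2
    rw [hwdef]
    show (∫ θ in (0:ℝ)..(2*π), x * Real.cos ((n:ℝ)*θ) + y * Real.sin ((n:ℝ)*θ)) = 0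
    rw [intervalIntegral.integral_add hA hB,
        intervalIntegral.integral_const_mul, intervalIntegral.integral_const_mul, h1, h2]
    ring
  -- pointwise estimate
  have hpt : ∀ θ ∈ Set.Icc (0:ℝ) (2*π), w θ * v θ - w θ ≤ 1 - v θ := by
    intro θ _
    have h1 : w θ * v θ - w θ = w θ * (v θ - 1) := by ring
    have h2 : w θ * (v θ - 1) ≤ |w θ * (v θ - 1)| := le_abs_self _
    have h3 : |w θ * (v θ - 1)| = |w θ| * |v θ - 1| := abs_mul _ _
    have h4 : |v θ - 1| = 1 - v θ := by
      rw [abs_of_nonpos (by linarith [abs_le.mp (habsv θ)])]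
      ring
    have h5 : |w θ| * (1 - v θ) ≤ 1 * (1 - v θ) := by
      apply mul_le_mul_of_nonneg_right (hwb θ)
      linarith [abs_le.mp (habsv θ)]
    rw [h1]
    calc w θ * (v θ - 1) ≤ |w θ| * |v θ - 1| := h3 ▸ h2
      _ = |w θ| * (1 - v θ) := by rw [h4]
      _ ≤ 1 * (1 - v θ) := h5
      _ = 1 - v θ := by ring
  have hIL : IntervalIntegrable (fun θ => w θ * v θ - w θ) MeasureTheory.volume 0 (2*π) := by
    apply hIgr; exact (hwcont.mul hvcont).sub hwcont
  have hIR : IntervalIntegrable (fun θ => 1 - v θ) MeasureTheory.volume 0 (2*π) := by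
    apply hIgr; exact continuous_const.sub hvcont
  have hmono := intervalIntegral.integral_mono_on
    (by positivity : (0:ℝ) ≤ 2*π) hIL hIR hpt
  have hL : (∫ θ in (0:ℝ)..(2*π), (w θ * v θ - w θ))
      = π * ((3/4:ℝ)^n * (x * c n + y * s n)) := by
    rw [intervalIntegral.integral_sub (hIgr (fun θ => w θ * v θ) (hwcont.mul hvcont)) (hIgr _ hwcont), hP, hwint]
    ring
  have hR : (∫ θ in (0:ℝ)..(2*π), ((1:ℝ) - v θ)) = 2*π*(1-α) := by
    rw [intervalIntegral.integral_sub (hIgr _ continuous_const) (hIgr _ hvcont), hmean]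
    simp
    ring
  rw [hL, hR] at hmono
  have : x * c n + y * s n = x * (a n).re + y * (J * a n).re := by rw [hcdef, hsdef]
  rw [this] at hmono
  linarith [hmono]


end WeakBohrAux

/-- Coefficient estimate used in the proof of the weak Bohr theorem. -/
theorem coeff_bound_weak_bohr
    (a : ℕ → ℍ) (f : ℍ → ℍ)
    (hBohr : BohrHypotheses f a)
    (α : ℝ) (hα0 : 0 ≤ α) (hα1 : α < 1)
    (ha0 : a 0 = (α : ℍ)) :
    ∀ n : ℕ, 1 ≤ n → ‖a n‖ < 2 ^ (n + 1) * (1 - α) := by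
  intro n hn
  have h1α : 0 < 1 - α := by linarith
  obtain ⟨J, hre, hsq, hJb⟩ := WeakBohrAux.exists_J (a n)
  set N := ‖a n‖ with hN
  rcases eq_or_ne N 0 with h0 | h0
  · rw [h0]
    exact mul_pos (by positivity) h1α
  · have hNpos : 0 < N := lt_of_le_of_ne (norm_nonneg _) (Ne.symm h0)
    have hxy : ((a n).re / N)^2 + ((J * a n).re / N)^2 ≤ 1 := by
      rw [div_pow, div_pow, ← add_div, hJb, div_self (by positivity)]
    have hcore := WeakBohrAux.core a f hBohr α ha0 n hn J hre hsq _ _ hxy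
    have hval : ((a n).re / N) * (a n).re + ((J * a n).re / N) * (J * a n).re = N := by
      rw [div_mul_eq_mul_div, div_mul_eq_mul_div, ← add_div,
        show (a n).re * (a n).re + (J * a n).re * (J * a n).re = N^2 by nlinarith [hJb],
        sq, mul_div_assoc, div_self h0, mul_one]
    rw [hval] at hcore
    have hπ : 0 < π := Real.pi_pos
    have h2 : (3/4:ℝ)^n * N ≤ 2*(1-α) := by nlinarith [hcore]
    have hprod : (3/4:ℝ)^n * (4/3:ℝ)^n = 1 := by rw [← mul_pow]; norm_num
    have h43pos : (0:ℝ) < (4/3:ℝ)^n := by positivity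
    have h3 : N ≤ 2*(1-α) * (4/3:ℝ)^n := by
      have h4 := mul_le_mul_of_nonneg_left h2 h43pos.le
      nlinarith [h4, hprod]
    have h43 : ((4:ℝ)/3)^n < 2^n :=
      pow_lt_pow_left₀ (by norm_num) (by norm_num) (Nat.one_le_iff_ne_zero.mp hn)
    have h5 : 2*(1-α) * ((4:ℝ)/3)^n < 2^(n+1) * (1-α) := by
      rw [pow_succ]
      nlinarith [h43, h1α]
    linarith
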